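/- Let 𝒢 ⊆ S_t(ℝ[X]) be any set of symmetric polynomial matrices. Then there exists a subset G ⊆ ℝ[X] such that K(𝒢) = K(G) and M(G)ᵗ ⊆ ℳ(𝒢), the quadratic module of S_t(ℝ[X]) generated by 𝒢. Moreover if 𝒢 is finite then G can be chosen finite, and if 𝒢 consists of homogeneous polynomial matrices then G consists of homogeneous polynomials. -/

import Mathlib

open MvPolynomial Matrix Finset

abbrev PolyMat (n t : ℕ) := Matrix (Fin t) (Fin t) (MvPolynomial (Fin n) ℝ)

noncomputable def evalMat {n t : ℕ} (x : Fin n → ℝ) (A : PolyMat n t) :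
    Matrix (Fin t) (Fin t) ℝ :=
  A.map (MvPolynomial.eval x)

def IsMatQuadraticModule {n t : ℕ} (Q : Set (PolyMat n t)) : Prop :=
  (1 : PolyMat n t) ∈ Q ∧ (∀ F G, F ∈ Q → G ∈ Q → F + G ∈ Q) ∧
    (∀ (A F : PolyMat n t), F ∈ Q → Aᵀ * F * A ∈ Q)

def MatArchimedean {n t : ℕ} (Q : Set (PolyMat n t)) : Prop :=
  ∀ F : PolyMat n t, F.IsSymm → ∃ l : ℝ, 0 < l ∧
    (l • (1 : PolyMat n t) + F ∈ Q ∧ l • (1 : PolyMat n t) - F ∈ Q)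

def KMat {n t : ℕ} (Q : Set (PolyMat n t)) : Set (Fin n → ℝ) :=
  {x | ∀ G ∈ Q, (evalMat x G).PosSemidef}

def KSet {n : ℕ} (G : Set (MvPolynomial (Fin n) ℝ)) : Set (Fin n → ℝ) :=
  {x | ∀ g ∈ G, 0 ≤ MvPolynomial.eval x g}

def IsQuadraticModule {n : ℕ} (M : Set (MvPolynomial (Fin n) ℝ)) : Prop :=
  (1 : MvPolynomial (Fin n) ℝ) ∈ M ∧ (∀ f g, f ∈ M → g ∈ M → f + g ∈ M) ∧
    ∀ (a f : MvPolynomial (Fin n) ℝ), f ∈ M → a ^ 2 * f ∈ M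

def IsSemiringCone {n : ℕ} (M : Set (MvPolynomial (Fin n) ℝ)) : Prop :=
  (∀ f g, f ∈ M → g ∈ M → f + g ∈ M) ∧ (∀ f g, f ∈ M → g ∈ M → f * g ∈ M) ∧
    ∀ r : ℝ, 0 ≤ r → MvPolynomial.C r ∈ M

def IsScalarArchimedean {n : ℕ} (M : Set (MvPolynomial (Fin n) ℝ)) : Prop :=
  ∀ f : MvPolynomial (Fin n) ℝ, ∃ l : ℝ, 0 < l ∧
    (MvPolynomial.C l + f ∈ M ∧ MvPolynomial.C l - f ∈ M)

def QM {n : ℕ} (G : Set (MvPolynomial (Fin n) ℝ)) : Set (MvPolynomial (Fin n) ℝ) :=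
  ⋂₀ {M | IsQuadraticModule M ∧ G ⊆ M}

def SR {n : ℕ} (G : Set (MvPolynomial (Fin n) ℝ)) : Set (MvPolynomial (Fin n) ℝ) :=
  ⋂₀ {M | IsSemiringCone M ∧ G ⊆ M}

def MatQM {n t : ℕ} (𝒢 : Set (PolyMat n t)) : Set (PolyMat n t) :=
  ⋂₀ {Q | IsMatQuadraticModule Q ∧ 𝒢 ⊆ Q}

def liftT {n : ℕ} (M : Set (MvPolynomial (Fin n) ℝ)) (t : ℕ) : Set (PolyMat n t) :=
  {F | ∃ (k : ℕ) (m : Fin k → MvPolynomial (Fin n) ℝ) (A : Fin k → PolyMat n t),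
    (∀ i, m i ∈ M) ∧ F = ∑ i, m i • ((A i)ᵀ * A i)}

def P0 {n : ℕ} : Set (MvPolynomial (Fin n) ℝ) := {p | ∀ s, 0 ≤ p.coeff s}

/-! ### Auxiliary machinery for Cimprič's scalar description theorem -/

section CimpricAux

variable {R : Type*} [CommRing R] {t : ℕ}

/-- quadratic form of a vector against a matrix -/
def cqf (u : Fin t → R) (M : Matrix (Fin t) (Fin t) R) : R := u ⬝ᵥ M *ᵥ u

/-- scaled Schur-complement step -/
def cschur (u : Fin t → R) (M : Matrix (Fin t) (Fin t) R) : Matrix (Fin t) (Fin t) R :=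
  cqf u M • M - vecMulVec (M *ᵥ u) (M *ᵥ u)

/-- iterated pivot products -/
def cprod : List (Fin t → R) → Matrix (Fin t) (Fin t) R → R
  | [], _ => 1
  | u :: L, M => cqf u M * cprod L (cschur u M)

/-- witness vector realizing the pivot product as a quadratic form -/
def czvec : List (Fin t → R) → Matrix (Fin t) (Fin t) R → (Fin t → R)
  | [], _ => 0
  | [u], _ => u
  | u :: v :: L, M =>
      cqf u M • czvec (v :: L) (cschur u M)
        - ((M *ᵥ u) ⬝ᵥ czvec (v :: L) (cschur u M)) • u

lemma cschur_isSymm {u : Fin t → R} {M : Matrix (Fin t) (Fin t) R} (hM : M.IsSymm) :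
    (cschur u M).IsSymm := by
  unfold Matrix.IsSymm cschur
  ext i j
  simp [Matrix.transpose_apply, Matrix.sub_apply, Matrix.smul_apply, vecMulVec_apply,
    smul_eq_mul, mul_comm, hM.apply]

lemma cschur_mulVec (u : Fin t → R) (M : Matrix (Fin t) (Fin t) R) (x : Fin t → R) :
    cschur u M *ᵥ x = cqf u M • (M *ᵥ x) - ((M *ᵥ u) ⬝ᵥ x) • (M *ᵥ u) := by
  unfold cschur
  rw [Matrix.sub_mulVec, Matrix.smul_mulVec]
  congr 1
  ext i
  simp [vecMulVec_apply, mulVec, dotProduct, Finset.mul_sum, Finset.sum_mul, mul_comm,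
    mul_left_comm]

lemma cqf_cschur (u w : Fin t → R) (M : Matrix (Fin t) (Fin t) R) :
    cqf w (cschur u M) = cqf u M * cqf w M - ((M *ᵥ u) ⬝ᵥ w) * ((M *ᵥ u) ⬝ᵥ w) := by
  unfold cqf
  rw [cschur_mulVec, dotProduct_sub, dotProduct_smul, dotProduct_smul]
  simp only [smul_eq_mul, dotProduct_comm w (M *ᵥ u)]
  unfold cqf
  ring

lemma symm_dot (u w : Fin t → R) {M : Matrix (Fin t) (Fin t) R} (hM : M.IsSymm) :
    u ⬝ᵥ M *ᵥ w = (M *ᵥ u) ⬝ᵥ w := by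
  rw [dotProduct_mulVec, ← Matrix.mulVec_transpose, hM]

/-- key identity: the witness vector realizes the pivot product as a quadratic form -/
lemma cqf_czvec : ∀ (L : List (Fin t → R)), L ≠ [] → ∀ (M : Matrix (Fin t) (Fin t) R),
    M.IsSymm → cqf (czvec L M) M = cprod L M
  | [], h, _, _ => absurd rfl h
  | [u], _, M, _ => by
      simp [czvec, cprod, cqf]
  | u :: v :: L, _, M, hM => by
      have hS : (cschur u M).IsSymm := cschur_isSymm hM
      have IH := cqf_czvec (v :: L) (by simp) (cschur u M) hS
      set w := czvec (v :: L) (cschur u M) with hw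
      set g := cqf u M with hg
      set a := (M *ᵥ u) ⬝ᵥ w with ha
      have hz : czvec (u :: v :: L) M = g • w - a • u := rfl
      have hrhs : cqf w (cschur u M) = g * cqf w M - a * a := by
        rw [cqf_cschur u w M]
      have expand : cqf (g • w - a • u) M = g * (cqf w (cschur u M)) := by
        rw [hrhs]
        unfold cqf
        rw [Matrix.mulVec_sub, Matrix.mulVec_smul, Matrix.mulVec_smul,
          dotProduct_sub, sub_dotProduct, sub_dotProduct,
          dotProduct_smul, dotProduct_smul, dotProduct_smul, dotProduct_smul,
          smul_dotProduct, smul_dotProduct]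
        have h1 : u ⬝ᵥ M *ᵥ w = a := by rw [symm_dot u w hM, ha]
        have h2 : w ⬝ᵥ M *ᵥ u = a := by rw [ha, dotProduct_comm]
        have h3 : u ⬝ᵥ M *ᵥ u = g := rfl
        simp only [smul_dotProduct, dotProduct_smul, smul_eq_mul, h1, h2, h3]
        ring
      rw [hz, expand, IH]
      rfl

variable {S : Type*} [CommRing S]

lemma cqf_map (f : R →+* S) (u : Fin t → R) (M : Matrix (Fin t) (Fin t) R) :
    cqf (f ∘ u) (M.map f) = f (cqf u M) := by
  unfold cqf
  simp [dotProduct, mulVec, map_sum, _root_.map_mul, Finset.mul_sum]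

lemma cschur_map (f : R →+* S) (u : Fin t → R) (M : Matrix (Fin t) (Fin t) R) :
    (cschur u M).map f = cschur (f ∘ u) (M.map f) := by
  unfold cschur
  ext i j
  simp [Matrix.map_apply, Matrix.sub_apply, Matrix.smul_apply, vecMulVec_apply,
    smul_eq_mul, cqf_map f u M, mulVec, dotProduct, map_sum, _root_.map_mul]

lemma cprod_map (f : R →+* S) : ∀ (L : List (Fin t → R)) (M : Matrix (Fin t) (Fin t) R),
    cprod (L.map fun u => f ∘ u) (M.map f) = f (cprod L M)
  | [], M => by simp [cprod]
  | u :: L, M => by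
      simp only [List.map_cons, cprod, _root_.map_mul, cqf_map f u M]
      rw [← cschur_map, cprod_map f L (cschur u M)]

lemma vecMulVec_conj (z v : Fin t → R) (G : Matrix (Fin t) (Fin t) R) :
    (vecMulVec z v)ᵀ * G * vecMulVec z v = cqf z G • vecMulVec v v := by
  ext j k
  simp only [Matrix.mul_apply, Matrix.transpose_apply, vecMulVec_apply, Matrix.smul_apply,
    smul_eq_mul, cqf, dotProduct, mulVec, Finset.sum_mul, Finset.mul_sum]
  rw [Finset.sum_comm]
  apply Finset.sum_congr rfl
  intro p _
  apply Finset.sum_congr rfl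
  intro q _
  ring

lemma sum_vecMulVec_rows (A : Matrix (Fin t) (Fin t) R) :
    ∑ i, vecMulVec (A i) (A i) = Aᵀ * A := by
  ext j k
  simp [Matrix.sum_apply, vecMulVec_apply, Matrix.mul_apply, Matrix.transpose_apply]

lemma cqf_smul_conj (z : Fin t → R) (G A : Matrix (Fin t) (Fin t) R) :
    cqf z G • (Aᵀ * A) = ∑ i, (vecMulVec z (A i))ᵀ * G * vecMulVec z (A i) := by
  rw [← sum_vecMulVec_rows, Finset.smul_sum]
  exact (Finset.sum_congr rfl fun i _ => (vecMulVec_conj z (A i) G)).symm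

end CimpricAux

section RealDetection

variable {t : ℕ}

lemma isHermitian_of_isSymm {M : Matrix (Fin t) (Fin t) ℝ} (hM : M.IsSymm) : M.IsHermitian := by
  rw [Matrix.IsHermitian, conjTranspose]
  ext i j
  simp [Matrix.map_apply, ← Matrix.IsSymm.apply hM i j]

/-- finite family of test vectors -/
def cuvec (t : ℕ) : (Fin t ⊕ Fin t × Fin t) → (Fin t → ℝ)
  | .inl i => Pi.single i 1
  | .inr p => Pi.single p.1 1 + Pi.single p.2 1

lemma eq_zero_of_cqf_zero {M : Matrix (Fin t) (Fin t) ℝ} (hM : M.IsSymm)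
    (h : ∀ c, cqf (cuvec t c) M = 0) : M = 0 := by
  have hdiag : ∀ i, M i i = 0 := by
    intro i
    have := h (.inl i)
    simpa [cqf, cuvec, Matrix.mulVec_single] using this
  ext i j
  have h2 := h (.inr (i, j))
  simp only [cqf, cuvec, Matrix.mulVec_add, Matrix.mulVec_single, dotProduct_add,
    add_dotProduct] at h2
  have hij : M j i = M i j := Matrix.IsSymm.apply hM i j
  simp [Matrix.mulVec_single, hdiag, hij] at h2
  simp [h2]

lemma psd_of_cprod_nonneg :
    ∀ (k : ℕ) (M : Matrix (Fin t) (Fin t) ℝ), M.IsSymm →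
    t ≤ k + Module.finrank ℝ (LinearMap.ker M.mulVecLin) →
    (∀ L : List (Fin t → ℝ), L.length ≤ k → (∀ u ∈ L, u ∈ Set.range (cuvec t)) →
      0 ≤ cprod L M) →
    M.PosSemidef := by
  intro k
  induction k with
  | zero =>
    intro M hM hrk _
    have hfr : Module.finrank ℝ (LinearMap.ker M.mulVecLin) = t := by
      have h1 : Module.finrank ℝ (LinearMap.ker M.mulVecLin) ≤
          Module.finrank ℝ (Fin t → ℝ) := Submodule.finrank_le _
      rw [Module.finrank_fin_fun] at h1
      omega
    have hker : LinearMap.ker M.mulVecLin = ⊤ := by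
      apply Submodule.eq_top_of_finrank_eq
      rw [hfr, Module.finrank_fin_fun]
    rw [LinearMap.ker_eq_top] at hker
    have hM0 : M = 0 := by
      ext i j
      have := LinearMap.congr_fun hker (Pi.single j 1)
      simp only [Matrix.mulVecLin_apply] at this
      have h2 : M *ᵥ Pi.single j 1 = 0 := by simpa using this
      have := congrFun h2 i
      simpa [Matrix.mulVec_single] using this
    rw [hM0]; exact Matrix.PosSemidef.zero
  | succ k IH =>
    intro M hM hrk hprod
    by_cases hz : ∀ c, cqf (cuvec t c) M = 0
    · rw [eq_zero_of_cqf_zero hM hz]; exact Matrix.PosSemidef.zero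
    · push_neg at hz
      obtain ⟨c, hc⟩ := hz
      set u := cuvec t c with hu
      set g := cqf u M with hg
      have hg0 : 0 ≤ g := by
        have := hprod [u] (by simp) (by
          intro u' hu'
          simp only [List.mem_singleton] at hu'
          subst hu'
          exact ⟨c, rfl⟩)
        simpa [cprod] using this
      have hgpos : 0 < g := lt_of_le_of_ne hg0 (Ne.symm hc)
      set H := cschur u M with hH
      have hHsym : H.IsSymm := cschur_isSymm hM
      have hkle : LinearMap.ker M.mulVecLin ≤ LinearMap.ker H.mulVecLin := by
        intro x hx
        rw [LinearMap.mem_ker, Matrix.mulVecLin_apply] at hx ⊢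
        rw [hH, cschur_mulVec, hx]
        have : (M *ᵥ u) ⬝ᵥ x = 0 := by
          rw [← symm_dot u x hM, hx, dotProduct_zero]
        rw [this]
        simp
      have hune : u ∈ LinearMap.ker H.mulVecLin := by
        rw [LinearMap.mem_ker, Matrix.mulVecLin_apply, hH, cschur_mulVec]
        have : (M *ᵥ u) ⬝ᵥ u = g := by rw [dotProduct_comm]; rfl
        rw [this]
        simp [hg]
      have hunm : u ∉ LinearMap.ker M.mulVecLin := by
        intro hmem
        rw [LinearMap.mem_ker, Matrix.mulVecLin_apply] at hmem
        apply hc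
        show cqf u M = 0
        unfold cqf
        rw [hmem, dotProduct_zero]
      have hlt : LinearMap.ker M.mulVecLin < LinearMap.ker H.mulVecLin :=
        lt_of_le_of_ne hkle (fun h => hunm (h ▸ hune))
      have hfrlt : Module.finrank ℝ (LinearMap.ker M.mulVecLin) <
          Module.finrank ℝ (LinearMap.ker H.mulVecLin) :=
        Submodule.finrank_lt_finrank_of_lt hlt
      have hrk' : t ≤ k + Module.finrank ℝ (LinearMap.ker H.mulVecLin) := by omega
      have hprod' : ∀ L : List (Fin t → ℝ), L.length ≤ k →
          (∀ u' ∈ L, u' ∈ Set.range (cuvec t)) → 0 ≤ cprod L H := by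
        intro L hlen hmem
        have := hprod (u :: L) (by simpa using hlen) (by
          intro u' hu'
          rcases List.mem_cons.mp hu' with h | h
          · subst h; exact ⟨c, rfl⟩
          · exact hmem _ h)
        rw [show cprod (u :: L) M = g * cprod L H from rfl] at this
        exact nonneg_of_mul_nonneg_right this hgpos
      have hHpsd : H.PosSemidef := IH H hHsym hrk' hprod'
      rw [Matrix.posSemidef_iff_dotProduct_mulVec]
      constructor
      · exact isHermitian_of_isSymm hM
      · intro x
        have hsx : star x = x := by funext i; exact star_trivial _
        rw [hsx]
        have h1 : 0 ≤ cqf x H := by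
          have := hHpsd.dotProduct_mulVec_nonneg x
          rwa [hsx] at this
        rw [cqf_cschur u x M] at h1
        have hmul : 0 ≤ g * cqf x M := by nlinarith [sq_nonneg ((M *ᵥ u) ⬝ᵥ x)]
        exact nonneg_of_mul_nonneg_right hmul hgpos

end RealDetection

section Homogeneity

lemma cprod_isHomogeneous {n t : ℕ} :
    ∀ (L : List (Fin t → MvPolynomial (Fin n) ℝ))
      (M : Matrix (Fin t) (Fin t) (MvPolynomial (Fin n) ℝ)) (d : ℕ),
    (∀ u ∈ L, ∀ i, (u i).IsHomogeneous 0) → (∀ i j, (M i j).IsHomogeneous d) →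
    ∃ e, (cprod L M).IsHomogeneous e
  | [], _, _, _, _ => ⟨0, by
      rw [show cprod ([] : List (Fin t → MvPolynomial (Fin n) ℝ)) _ = 1 from rfl]
      exact MvPolynomial.isHomogeneous_one _ _⟩
  | u :: L, M, d, hL, hM => by
    have hu : ∀ i, (u i).IsHomogeneous 0 := hL u (by simp)
    have hcol : ∀ i, ((M *ᵥ u) i).IsHomogeneous d := fun i => by
      have : (∑ j, M i j * u j).IsHomogeneous d :=
        MvPolynomial.IsHomogeneous.sum _ _ _ (fun j _ => by simpa using (hM i j).mul (hu j))
      simpa [mulVec, dotProduct] using this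
    have hqf : (cqf u M).IsHomogeneous d := by
      have : (∑ i, u i * (M *ᵥ u) i).IsHomogeneous d :=
        MvPolynomial.IsHomogeneous.sum _ _ _ (fun i _ => by simpa using (hu i).mul (hcol i))
      simpa [cqf, dotProduct] using this
    have hs : ∀ i j, ((cschur u M) i j).IsHomogeneous (d + d) := fun i j => by
      have h1 : (cqf u M * M i j).IsHomogeneous (d + d) := hqf.mul (hM i j)
      have h2 : ((M *ᵥ u) i * (M *ᵥ u) j).IsHomogeneous (d + d) := (hcol i).mul (hcol j)
      simpa [cschur, Matrix.sub_apply, Matrix.smul_apply, vecMulVec_apply, smul_eq_mul]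
        using h1.sub h2
    have := cprod_isHomogeneous L (cschur u M) (d + d)
      (fun v hv => hL v (List.mem_cons_of_mem _ hv)) hs
    obtain ⟨e, he⟩ := this
    exact ⟨d + e, by
      rw [show cprod (u :: L) M = cqf u M * cprod L (cschur u M) from rfl]
      exact hqf.mul he⟩

end Homogeneity


/-- Cimprič: every set `𝒢` of symmetric polynomial matrices admits a scalar description `G`
with `K(𝒢) = K(G)` and `M(G)ᵗ ⊆ ℳ(𝒢)`; `G` can be taken finite if `𝒢` is, and
homogeneous if `𝒢` consists of homogeneous matrices. -/
theorem cimpric_scalar_description {n t : ℕ} (𝒢 : Set (PolyMat n t))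
    (h𝒢sym : ∀ G ∈ 𝒢, Matrix.IsSymm G) :
    ∃ G : Set (MvPolynomial (Fin n) ℝ),
      KMat 𝒢 = KSet G ∧ liftT (QM G) t ⊆ MatQM 𝒢 ∧
      (𝒢.Finite → G.Finite) ∧
      ((∀ A ∈ 𝒢, ∃ d : ℕ, ∀ i j, (A i j).IsHomogeneous d) →
        ∀ g ∈ G, ∃ e : ℕ, g.IsHomogeneous e) := by
  classical
  -- the scalar lift of a constant real vector
  set polyLift : (Fin t → ℝ) → (Fin t → MvPolynomial (Fin n) ℝ) :=
    fun u i => MvPolynomial.C (u i) with hpolyLift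
  set U : Set (Fin t → ℝ) := Set.range (cuvec t) with hUdef
  -- the scalar description
  set G : Set (MvPolynomial (Fin n) ℝ) :=
    {g | ∃ G' ∈ 𝒢, ∃ L : List (Fin t → ℝ), L ≠ [] ∧ L.length ≤ t ∧ (∀ u ∈ L, u ∈ U) ∧
      g = cprod (L.map polyLift) G'} with hGdef
  have evalKey : ∀ (x : Fin n → ℝ) (L : List (Fin t → ℝ)) (G' : PolyMat n t),
      MvPolynomial.eval x (cprod (L.map polyLift) G') = cprod L (evalMat x G') := by
    intro x L G'
    have h := cprod_map (MvPolynomial.eval x) (L.map polyLift) G'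
    rw [List.map_map] at h
    have h2 : ((fun u => (⇑(MvPolynomial.eval x)) ∘ u) ∘ polyLift) = id := by
      funext u
      funext i
      simp [hpolyLift]
    rw [h2, List.map_id] at h
    exact h.symm
  have evalSymm : ∀ (x : Fin n → ℝ) (G' : PolyMat n t), G'.IsSymm → (evalMat x G').IsSymm := by
    intro x G' hG'
    unfold Matrix.IsSymm evalMat
    ext i j
    simp [Matrix.transpose_apply, Matrix.map_apply, hG'.apply]
  refine ⟨G, ?_, ?_, ?_, ?_⟩
  · -- K equality
    ext x
    constructor
    · intro hx g hg
      obtain ⟨G', hG'mem, L, hne, _, _, rfl⟩ := hg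
      rw [evalKey]
      have hMsym : (evalMat x G').IsSymm := evalSymm x G' (h𝒢sym G' hG'mem)
      rw [← cqf_czvec L hne (evalMat x G') hMsym]
      have hpsd := hx G' hG'mem
      have := hpsd.dotProduct_mulVec_nonneg (czvec L (evalMat x G'))
      rwa [show star (czvec L (evalMat x G')) = czvec L (evalMat x G') from
        funext fun i => star_trivial _] at this
    · intro hx G' hG'mem
      apply psd_of_cprod_nonneg t (evalMat x G') (evalSymm x G' (h𝒢sym G' hG'mem))
        (Nat.le_add_right _ _)
      intro L hlen hmem
      cases L with
      | nil => rw [show cprod ([] : List (Fin t → ℝ)) _ = 1 from rfl]; exact zero_le_one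
      | cons v L' =>
        rw [← evalKey]
        exact hx _ ⟨G', hG'mem, v :: L', by simp, hlen, hmem, rfl⟩
  · -- module inclusion
    intro F hF
    obtain ⟨k, m, A, hm, rfl⟩ := hF
    intro Q hQ
    simp only [Set.mem_setOf_eq] at hQ
    obtain ⟨hQmod, hQsub⟩ := hQ
    have h0Q : (0 : PolyMat n t) ∈ Q := by
      have := hQmod.2.2 0 1 hQmod.1
      simpa using this
    have hsumQ : ∀ {ι : Type} (s : Finset ι) (f : ι → PolyMat n t),
        (∀ i ∈ s, f i ∈ Q) → ∑ i ∈ s, f i ∈ Q := by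
      intro ι s f hf
      induction s using Finset.induction_on with
      | empty => simpa using h0Q
      | insert a s hnotmem ih =>
        rw [Finset.sum_insert hnotmem]
        exact hQmod.2.1 _ _ (hf _ (Finset.mem_insert_self _ _))
          (ih fun i hi => hf i (Finset.mem_insert_of_mem hi))
    -- quadratic-module transfer set
    set Mx : Set (MvPolynomial (Fin n) ℝ) :=
      {p | ∀ B : PolyMat n t, p • (Bᵀ * B) ∈ Q} with hMx
    have hMxqm : IsQuadraticModule Mx := by
      refine ⟨?_, ?_, ?_⟩
      · intro B
        have := hQmod.2.2 B 1 hQmod.1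
        simpa [Matrix.mul_one] using this
      · intro f g hf hg B
        have : (f + g) • (Bᵀ * B) = f • (Bᵀ * B) + g • (Bᵀ * B) := add_smul f g _
        rw [this]
        exact hQmod.2.1 _ _ (hf B) (hg B)
      · intro a f hf B
        have key : (a ^ 2 * f) • (Bᵀ * B) = f • ((a • B)ᵀ * (a • B)) := by
          rw [Matrix.transpose_smul, Matrix.smul_mul, Matrix.mul_smul, smul_smul, smul_smul]
          ring_nf
        rw [key]
        exact hf (a • B)
    have hGMx : G ⊆ Mx := by
      intro g hg
      obtain ⟨G', hG'mem, L, hne, _, _, rfl⟩ := hg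
      intro B
      have hLM : (L.map polyLift) ≠ [] := by
        simpa using hne
      have hsym : (G' : PolyMat n t).IsSymm := h𝒢sym G' hG'mem
      rw [← cqf_czvec (L.map polyLift) hLM G' hsym, cqf_smul_conj]
      apply hsumQ
      intro i _
      exact hQmod.2.2 _ _ (hQsub hG'mem)
    have hQMsub : QM G ⊆ Mx := Set.sInter_subset_of_mem ⟨hMxqm, hGMx⟩
    apply hsumQ
    intro i _
    exact hQMsub (hm i) (A i)
  · -- finiteness
    intro h𝒢fin
    have hUfin : U.Finite := Set.finite_range _
    haveI := hUfin.to_subtype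
    have hlist : {l : List U | l.length ≤ t}.Finite := List.finite_length_le U t
    have hSfin : {L : List (Fin t → ℝ) | L.length ≤ t ∧ ∀ u ∈ L, u ∈ U}.Finite := by
      apply Set.Finite.subset (hlist.image (List.map (fun (u : U) => (u : Fin t → ℝ))))
      intro L hL
      obtain ⟨hlen, hmem⟩ := hL
      refine ⟨L.attach.map (fun x => (⟨x.1, hmem _ x.2⟩ : U)), ?_, ?_⟩
      · simpa using hlen
      · rw [List.map_map]
        simpa using List.attach_map_val L (fun x => x)
    have : G ⊆ (fun p : PolyMat n t × List (Fin t → ℝ) => cprod (p.2.map polyLift) p.1) ''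
        (𝒢 ×ˢ {L : List (Fin t → ℝ) | L.length ≤ t ∧ ∀ u ∈ L, u ∈ U}) := by
      intro g hg
      obtain ⟨G', hG'mem, L, _, hlen, hmem, rfl⟩ := hg
      exact ⟨(G', L), ⟨hG'mem, hlen, hmem⟩, rfl⟩
    exact Set.Finite.subset ((h𝒢fin.prod hSfin).image _) this
  · -- homogeneity
    intro hhom g hg
    obtain ⟨G', hG'mem, L, _, _, _, rfl⟩ := hg
    obtain ⟨d, hd⟩ := hhom G' hG'mem
    apply cprod_isHomogeneous (L.map polyLift) G' d
    · intro u hu i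
      simp only [List.mem_map] at hu
      obtain ⟨v, _, rfl⟩ := hu
      simpa [hpolyLift] using MvPolynomial.isHomogeneous_C (Fin n) (v i)
    · exact hd
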